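/- arXiv:1811.08313 — 2 statements merged into one kernel-verified Lean document; each statement's English description precedes it below -/
import Mathlib

section
/- With the hypotheses of the perturbation lemma, assume in addition that $A_1$ is not almost surely constant, the sequence $(q_n)$ is not constant, and $p_n > 0$ for every $n$. Then the inequality is strict: $\mathbb{E}\big[\sum_{n\ge1} \tilde p_n q_n\big] < \sum_{n\ge1} p_n q_n$. -/
open MeasureTheory ProbabilityTheory Filter

lemma aux_ne_pos {Ω : Type*} [MeasurableSpace Ω] (P : Measure Ω) [IsProbabilityMeasure P]
    (X Y : Ω → ℝ) (hX : Measurable X) (hY : Measurable Y)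
    (hXY : IndepFun X Y P) (hid : P.map Y = P.map X)
    (hnc : ∀ c : ℝ, ¬ (∀ᵐ ω ∂P, X ω = c)) :
    0 < P {ω | X ω ≠ Y ω} := by
  set μ := P.map X with hμ
  have hμprob : IsProbabilityMeasure μ := Measure.isProbabilityMeasure_map hX.aemeasurable
  by_contra h
  push_neg at h
  have h0 : P {ω | X ω ≠ Y ω} = 0 := le_antisymm h zero_le
  have hpair : P.map (fun ω => (X ω, Y ω)) = μ.prod μ := by
    rw [(indepFun_iff_map_prod_eq_prod_map_map hX.aemeasurable hY.aemeasurable).mp hXY, hid]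
  have hdiag : MeasurableSet {z : ℝ × ℝ | z.1 = z.2} :=
    measurableSet_eq_fun measurable_fst measurable_snd
  have hcompl : (μ.prod μ) {z : ℝ × ℝ | z.1 = z.2}ᶜ = 0 := by
    rw [← hpair, Measure.map_apply (hX.prodMk hY) hdiag.compl]
    convert h0 using 2
    rfl
  have hd1 : (μ.prod μ) {z : ℝ × ℝ | z.1 = z.2} = 1 := by
    have := prob_compl_eq_zero_iff (μ := μ.prod μ) hdiag
    exact this.mp hcompl
  have hslice : ∀ x : ℝ, (Prod.mk x ⁻¹' {z : ℝ × ℝ | z.1 = z.2}) = {x} := by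
    intro x; ext y; simp [eq_comm]
  have hint : ∫⁻ x, μ {x} ∂μ = 1 := by
    rw [← hd1, Measure.prod_apply hdiag]
    refine lintegral_congr fun x => by rw [hslice x]
  have hfmeas : Measurable fun x : ℝ => μ {x} := by
    have h2 := measurable_measure_prodMk_left (ν := μ) hdiag
    simp only [hslice] at h2
    exact h2
  have hle1 : ∀ x : ℝ, μ {x} ≤ 1 := fun x => prob_le_one
  have hsub : ∫⁻ x, (1 - μ {x}) ∂μ = 0 := by
    rw [lintegral_sub hfmeas (by rw [hint]; exact ENNReal.one_ne_top) (ae_of_all _ hle1),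
      lintegral_one, measure_univ, hint, tsub_self]
  have hae := (lintegral_eq_zero_iff (measurable_const.sub hfmeas)).mp hsub
  have hae' : ∀ᵐ x ∂μ, μ {x} = 1 := by
    filter_upwards [hae] with x hx
    simp only [Pi.zero_apply] at hx
    exact le_antisymm (hle1 x) (tsub_eq_zero_iff_le.mp hx)
  have hne : {x : ℝ | μ {x} = 1}.Nonempty := by
    apply nonempty_of_measure_ne_zero (μ := μ)
    intro hzero
    have hone : μ {x : ℝ | μ {x} = 1} = μ Set.univ := by
      apply measure_congr
      rw [Filter.eventuallyEq_set]
      filter_upwards [hae'] with x hx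
      exact iff_of_true hx trivial
    rw [hzero, measure_univ] at hone; exact zero_ne_one hone
  obtain ⟨c, hc⟩ := hne
  apply hnc c
  have hmap := Measure.map_apply (μ := P) hX (measurableSet_singleton c)
  have hPc : P (X ⁻¹' {c}) = 1 := by
    rw [← hmap]; exact hc
  have hms : MeasurableSet (X ⁻¹' {c}) := hX (measurableSet_singleton c)
  have hcompl0 : P (X ⁻¹' {c})ᶜ = 0 := (prob_compl_eq_zero_iff hms).mpr hPc
  rw [ae_iff]
  have hset : {ω | ¬X ω = c} = (X ⁻¹' {c})ᶜ := by ext ω; simp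
  rw [hset]; exact hcompl0

set_option maxHeartbeats 1000000 in
/-- **Perturbation lemma (strict).** Under the hypotheses of the perturbation lemma,
if moreover `A 0` is not a.s. constant, `(q n)` is not constant and all `p n > 0`,
then the inequality is strict: `𝔼[∑ p̃ n q n] < ∑ p n q n`. -/
theorem perturbation_lt
    {Ω : Type*} [MeasurableSpace Ω] (P : Measure Ω) [IsProbabilityMeasure P]
    (p q : ℕ → ℝ) (hp_anti : Antitone p) (hq_anti : Antitone q)
    (hp_nonneg : ∀ n, 0 ≤ p n) (hq_nonneg : ∀ n, 0 ≤ q n)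
    (hp_sum : HasSum p 1)
    (A : ℕ → Ω → ℝ) (hA_meas : ∀ n, Measurable (A n))
    (hA_pos : ∀ n ω, 0 < A n ω)
    (hA_indep : iIndepFun A P)
    (hA_ident : ∀ n, IdentDistrib (A n) (A 0) P P)
    (hA_sum : ∀ᵐ ω ∂P, Summable (fun n => A n ω * p n))
    (hA_nonconst : ∀ c : ℝ, ¬ (∀ᵐ ω ∂P, A 0 ω = c))
    (hq_nonconst : ∃ m n, q m ≠ q n)
    (hp_pos : ∀ n, 0 < p n) :
    ∫ ω, (∑' n, (A n ω * p n / ∑' k, A k ω * p k) * q n) ∂P < ∑' n, p n * q n := by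
  classical
  set S : Ω → ℝ := fun ω => ∑' k, A k ω * p k with hS_def
  have hAp_nonneg : ∀ k ω, 0 ≤ A k ω * p k := fun k ω =>
    mul_nonneg (hA_pos k ω).le (hp_nonneg k)
  -- S as toReal of an ENNReal tsum (everywhere)
  have hS_eq : ∀ ω, S ω = (∑' k, ENNReal.ofReal (A k ω * p k)).toReal := by
    intro ω
    by_cases h : Summable (fun k => A k ω * p k)
    · rw [← ENNReal.ofReal_tsum_of_nonneg (fun k => hAp_nonneg k ω) h,
        ENNReal.toReal_ofReal (tsum_nonneg fun k => hAp_nonneg k ω)]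
    · have htop : (∑' k, ENNReal.ofReal (A k ω * p k)) = ⊤ := by
        by_contra hne
        apply h
        have hsum : Summable (fun k => (ENNReal.ofReal (A k ω * p k)).toReal) :=
          ENNReal.summable_toReal hne
        exact hsum.congr fun k => ENNReal.toReal_ofReal (hAp_nonneg k ω)
      simp only [hS_def, tsum_eq_zero_of_not_summable h, htop, ENNReal.toReal_top]
  have hS_meas : Measurable S := by
    have h1 : Measurable fun ω => ∑' k, ENNReal.ofReal (A k ω * p k) :=
      Measurable.ennreal_tsum fun k => ((hA_meas k).mul_const (p k)).ennreal_ofReal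
    exact (funext hS_eq : S = _) ▸ h1.ennreal_toReal
  have hS_nonneg : ∀ ω, 0 ≤ S ω := fun ω => (hS_eq ω) ▸ ENNReal.toReal_nonneg
  -- a.e. properties
  have hS_pos : ∀ᵐ ω ∂P, 0 < S ω := by
    filter_upwards [hA_sum] with ω hω
    exact Summable.tsum_pos hω (fun k => hAp_nonneg k ω) 0
      (mul_pos (hA_pos 0 ω) (hp_pos 0))
  have hS_le : ∀ᵐ ω ∂P, ∀ n, A n ω * p n ≤ S ω := by
    filter_upwards [hA_sum] with ω hω n
    exact Summable.le_tsum hω n fun j _ => hAp_nonneg j ω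
  -- the coefficients c n
  set c : ℕ → ℝ := fun n => ∫ ω, A n ω / S ω ∂P with hc_def
  have hAS_meas : ∀ n, Measurable fun ω => A n ω / S ω := fun n => (hA_meas n).div hS_meas
  have hAS_nonneg : ∀ n ω, 0 ≤ A n ω / S ω := fun n ω =>
    div_nonneg (hA_pos n ω).le (hS_nonneg ω)
  have hAS_bdd : ∀ n, ∀ᵐ ω ∂P, ‖A n ω / S ω‖ ≤ 1 / p n := by
    intro n
    filter_upwards [hS_pos, hS_le] with ω h1 h2
    rw [Real.norm_of_nonneg (hAS_nonneg n ω), div_le_div_iff₀ h1 (hp_pos n)]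
    calc A n ω * p n ≤ S ω := h2 n
    _ = S ω * 1 := (mul_one _).symm
    _ ≤ 1 * S ω := by rw [one_mul, mul_one]
  have hAS_int : ∀ n, Integrable (fun ω => A n ω / S ω) P := fun n =>
    Integrable.mono' (integrable_const (1 / p n))
      (hAS_meas n).aestronglyMeasurable (hAS_bdd n)
  have hc_nonneg : ∀ n, 0 ≤ c n := fun n =>
    integral_nonneg fun ω => hAS_nonneg n ω
  -- interchanging sum and integral
  have hBsum : ∀ᵐ ω ∂P, Summable (fun n => A n ω * p n / S ω) := by
    filter_upwards [hA_sum] with ω hω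
    simpa only [div_eq_mul_inv] using hω.mul_right (S ω)⁻¹
  have hBtsum : ∀ᵐ ω ∂P, ∑' n, A n ω * p n / S ω = 1 := by
    filter_upwards [hA_sum, hS_pos] with ω hω h1
    rw [tsum_div_const, div_eq_one_iff_eq h1.ne']
  have hswap : ∀ (r : ℕ → ℝ), (∀ n, 0 ≤ r n) → (∀ n, r n ≤ r 0) →
      ∫ ω, (∑' n, (A n ω * p n / S ω) * r n) ∂P
        = ∑' n, ∫ ω, (A n ω * p n / S ω) * r n ∂P := by
    intro r hr0 hrC
    refine integral_tsum (fun n => (((((hA_meas n).mul_const (p n)).div hS_meas).mul_const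
      (r n))).aestronglyMeasurable) ?_
    have hb : ∀ n, ∫⁻ ω, ‖(A n ω * p n / S ω) * r n‖ₑ ∂P
        ≤ ENNReal.ofReal (r 0) * ∫⁻ ω, ENNReal.ofReal (A n ω * p n / S ω) ∂P := by
      intro n
      rw [← lintegral_const_mul _ (show Measurable (fun ω => ENNReal.ofReal (A n ω * p n / S ω)) from
        (((hA_meas n).mul_const (p n)).div hS_meas).ennreal_ofReal)]
      refine lintegral_mono fun ω => ?_
      have hnn : 0 ≤ (A n ω * p n / S ω) * r n :=
        mul_nonneg (div_nonneg (hAp_nonneg n ω) (hS_nonneg ω)) (hr0 n)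
      rw [Real.enorm_eq_ofReal hnn,
        ENNReal.ofReal_mul (div_nonneg (hAp_nonneg n ω) (hS_nonneg ω)), mul_comm]
      exact mul_le_mul_left (ENNReal.ofReal_le_ofReal (hrC n)) _
    have hone : ∫⁻ ω, ∑' n, ENNReal.ofReal (A n ω * p n / S ω) ∂P = 1 := by
      have hae : ∀ᵐ ω ∂P, ∑' n, ENNReal.ofReal (A n ω * p n / S ω) = 1 := by
        filter_upwards [hBsum, hBtsum] with ω h1 h2
        rw [← ENNReal.ofReal_tsum_of_nonneg
          (fun n => div_nonneg (hAp_nonneg n ω) (hS_nonneg ω)) h1, h2, ENNReal.ofReal_one]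
      rw [lintegral_congr_ae hae, lintegral_one, measure_univ]
    intro htop
    have hcalc : ∑' n, ∫⁻ ω, ‖(A n ω * p n / S ω) * r n‖ₑ ∂P ≤ ENNReal.ofReal (r 0) := by
      calc ∑' n, ∫⁻ ω, ‖(A n ω * p n / S ω) * r n‖ₑ ∂P
          ≤ ∑' n, ENNReal.ofReal (r 0) * ∫⁻ ω, ENNReal.ofReal (A n ω * p n / S ω) ∂P :=
            ENNReal.tsum_le_tsum hb
        _ = ENNReal.ofReal (r 0) * ∑' n, ∫⁻ ω, ENNReal.ofReal (A n ω * p n / S ω) ∂P :=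
            ENNReal.tsum_mul_left
        _ = ENNReal.ofReal (r 0) * ∫⁻ ω, ∑' n, ENNReal.ofReal (A n ω * p n / S ω) ∂P := by
            rw [lintegral_tsum fun n =>
              (show Measurable (fun ω => ENNReal.ofReal (A n ω * p n / S ω)) from
                (((hA_meas n).mul_const (p n)).div hS_meas).ennreal_ofReal).aemeasurable]
        _ = ENNReal.ofReal (r 0) := by rw [hone, mul_one]
    rw [htop] at hcalc
    exact ENNReal.ofReal_ne_top (top_le_iff.mp hcalc)
  -- the two sum identities
  have hterm : ∀ (r : ℕ → ℝ) (n : ℕ),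
      ∫ ω, (A n ω * p n / S ω) * r n ∂P = p n * r n * c n := by
    intro r n
    have : ∀ ω, (A n ω * p n / S ω) * r n = (p n * r n) * (A n ω / S ω) := fun ω => by ring
    rw [integral_congr_ae (ae_of_all _ this), integral_const_mul]
  have key2 : ∑' n, p n * c n = 1 := by
    have h1 := hswap (fun _ => 1) (fun _ => zero_le_one) (fun _ => le_rfl)
    have h2 : ∫ ω, (∑' n, (A n ω * p n / S ω) * (1:ℝ)) ∂P = 1 := by
      have : ∫ ω, (∑' n, (A n ω * p n / S ω) * (1:ℝ)) ∂P = ∫ _ω, (1:ℝ) ∂P := by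
        apply integral_congr_ae
        filter_upwards [hBtsum] with ω hω
        simp only [mul_one, hω]
      rw [this, integral_const, probReal_univ, one_smul]
    calc ∑' n, p n * c n = ∑' n, ∫ ω, (A n ω * p n / S ω) * (1:ℝ) ∂P := by
          refine tsum_congr fun n => ?_
          rw [hterm (fun _ => 1) n, mul_one]
      _ = 1 := by rw [← h1, h2]
  have key1 : ∫ ω, (∑' n, (A n ω * p n / S ω) * q n) ∂P = ∑' n, p n * q n * c n := by
    rw [hswap q hq_nonneg fun n => hq_anti (Nat.zero_le n)]
    exact tsum_congr fun n => hterm q n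
  rw [key1]
  -- summability facts
  have hpc_nonneg : ∀ n, 0 ≤ p n * c n := fun n => mul_nonneg (hp_nonneg n) (hc_nonneg n)
  have hpc_sum : Summable (fun n => p n * c n) := by
    by_contra hns
    rw [tsum_eq_zero_of_not_summable hns] at key2
    norm_num at key2
  have hpq_sum : Summable (fun n => p n * q n) := by
    refine Summable.of_nonneg_of_le (fun n => mul_nonneg (hp_nonneg n) (hq_nonneg n))
      (fun n => ?_) (hp_sum.summable.mul_right (q 0))
    exact mul_le_mul_of_nonneg_left (hq_anti (Nat.zero_le n)) (hp_nonneg n)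
  have hpqc_sum : Summable (fun n => p n * q n * c n) := by
    refine Summable.of_nonneg_of_le
      (fun n => mul_nonneg (mul_nonneg (hp_nonneg n) (hq_nonneg n)) (hc_nonneg n))
      (fun n => ?_) (hpc_sum.mul_left (q 0))
    calc p n * q n * c n = q n * (p n * c n) := by ring
      _ ≤ q 0 * (p n * c n) :=
          mul_le_mul_of_nonneg_right (hq_anti (Nat.zero_le n)) (hpc_nonneg n)
  -- the exchange lemma
  have key3 : ∀ i j, i ≠ j → ∃ K : ℝ, 0 < K ∧ c i - c j = -((p i - p j) * K) / 2 := by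
    intro i j hij
    set X : Ω → ℝ := A i with hX_def
    set Y : Ω → ℝ := A j with hY_def
    -- the remainder R, measurable w.r.t. the σ-algebra generated by the other coordinates
    set R : Ω → ℝ := fun ω =>
      (∑' k, ENNReal.ofReal (if k = i ∨ k = j then 0 else A k ω * p k)).toReal with hR_def
    have hR_nonneg : ∀ ω, 0 ≤ R ω := fun ω => ENNReal.toReal_nonneg
    have hAk_mT : ∀ k, k ∈ ({i, j} : Set ℕ)ᶜ → @Measurable Ω ℝ
        (⨆ k ∈ ({i, j} : Set ℕ)ᶜ, MeasurableSpace.comap (A k) inferInstance) _ (A k) := by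
      intro k hk
      exact Measurable.of_comap_le
        (le_biSup (fun k => MeasurableSpace.comap (A k) inferInstance) hk)
    have hAk_mP : ∀ k, k ∈ ({i, j} : Set ℕ) → @Measurable Ω ℝ
        (⨆ k ∈ ({i, j} : Set ℕ), MeasurableSpace.comap (A k) inferInstance) _ (A k) := by
      intro k hk
      exact Measurable.of_comap_le
        (le_biSup (fun k => MeasurableSpace.comap (A k) inferInstance) hk)
    have hR_mT : @Measurable Ω ℝ
        (⨆ k ∈ ({i, j} : Set ℕ)ᶜ, MeasurableSpace.comap (A k) inferInstance) _ R := by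
      refine Measurable.ennreal_toReal (Measurable.ennreal_tsum fun k => ?_)
      by_cases hk : k = i ∨ k = j
      · simp only [if_pos hk]
        exact measurable_const
      · simp only [if_neg hk]
        push_neg at hk
        refine Measurable.ennreal_ofReal ?_
        exact (hAk_mT k (by simp [hk.1, hk.2])).mul_const _
    have hmT_le : (⨆ k ∈ ({i, j} : Set ℕ)ᶜ, MeasurableSpace.comap (A k) inferInstance)
        ≤ ‹MeasurableSpace Ω› :=
      iSup₂_le fun k _ => (hA_meas k).comap_le
    have hR_meas : Measurable R := hR_mT.mono hmT_le le_rfl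
    have hpair_meas : Measurable fun ω => (X ω, Y ω) := (hA_meas i).prodMk (hA_meas j)
    have hpair_mP : @Measurable Ω (ℝ × ℝ)
        (⨆ k ∈ ({i, j} : Set ℕ), MeasurableSpace.comap (A k) inferInstance) _
        (fun ω => (X ω, Y ω)) :=
      Measurable.prodMk (hAk_mP i (by simp)) (hAk_mP j (by simp))
    -- independence of the pair (X, Y) and R
    have hIndepFun : IndepFun (fun ω => (X ω, Y ω)) R P := by
      have h_le : ∀ k : ℕ, MeasurableSpace.comap (A k) inferInstance
          ≤ ‹MeasurableSpace Ω› := fun k => (hA_meas k).comap_le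
      have hbi := indep_biSup_compl h_le ((iIndepFun_iff_iIndep _ _ _).mp hA_indep) {i, j}
      exact indep_of_indep_of_le_right (indep_of_indep_of_le_left hbi
        ((measurable_iff_comap_le).mp hpair_mP)) ((measurable_iff_comap_le).mp hR_mT)
    -- laws
    set μ : Measure ℝ := P.map (A 0) with hμ_def
    have hμ_prob : IsProbabilityMeasure μ := Measure.isProbabilityMeasure_map (hA_meas 0).aemeasurable
    set ν : Measure ℝ := P.map R with hν_def
    have hν_prob : IsProbabilityMeasure ν := Measure.isProbabilityMeasure_map hR_meas.aemeasurable
    have hmapX : P.map X = μ := (hA_ident i).map_eq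
    have hmapY : P.map Y = μ := (hA_ident j).map_eq
    have hpairlaw : P.map (fun ω => (X ω, Y ω)) = μ.prod μ := by
      rw [(indepFun_iff_map_prod_eq_prod_map_map (hA_meas i).aemeasurable
        (hA_meas j).aemeasurable).mp (hA_indep.indepFun hij), hmapX, hmapY]
    have hW_meas : Measurable fun ω => ((X ω, Y ω), R ω) := hpair_meas.prodMk hR_meas
    have hlawW : P.map (fun ω => ((X ω, Y ω), R ω)) = (μ.prod μ).prod ν := by
      rw [(indepFun_iff_map_prod_eq_prod_map_map hpair_meas.aemeasurable
        hR_meas.aemeasurable).mp hIndepFun, hpairlaw]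
    have hinv : ((μ.prod μ).prod ν).map (Prod.map Prod.swap id) = (μ.prod μ).prod ν := by
      rw [← Measure.map_prod_map _ _ measurable_swap measurable_id, Measure.prod_swap,
        Measure.map_id]
    -- exchangeability
    have hExch : ∀ φ : (ℝ × ℝ) × ℝ → ℝ, Measurable φ →
        ∫ ω, φ ((X ω, Y ω), R ω) ∂P = ∫ ω, φ ((Y ω, X ω), R ω) ∂P := by
      intro φ hφ
      have he_meas : Measurable (Prod.map (Prod.swap : ℝ × ℝ → ℝ × ℝ) (id : ℝ → ℝ)) :=
        measurable_swap.prodMap measurable_id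
      have h1 : ∫ z, φ z ∂((μ.prod μ).prod ν) = ∫ ω, φ ((X ω, Y ω), R ω) ∂P := by
        rw [← hlawW]
        exact integral_map hW_meas.aemeasurable hφ.aestronglyMeasurable
      have h2 : ∫ z, φ z ∂((μ.prod μ).prod ν) = ∫ ω, φ ((Y ω, X ω), R ω) ∂P := by
        have e1 : ∫ z, φ z ∂(((μ.prod μ).prod ν).map (Prod.map Prod.swap id))
            = ∫ z, φ (Prod.map Prod.swap id z) ∂((μ.prod μ).prod ν) :=
          integral_map he_meas.aemeasurable hφ.aestronglyMeasurable
        have e2 : ∫ z, φ (Prod.map Prod.swap id z) ∂(P.map fun ω => ((X ω, Y ω), R ω))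
            = ∫ ω, φ (Prod.map Prod.swap id ((X ω, Y ω), R ω)) ∂P :=
          integral_map hW_meas.aemeasurable ((hφ.comp he_meas).aestronglyMeasurable)
        calc ∫ z, φ z ∂((μ.prod μ).prod ν)
            = ∫ z, φ z ∂(((μ.prod μ).prod ν).map (Prod.map Prod.swap id)) := by rw [hinv]
          _ = ∫ z, φ (Prod.map Prod.swap id z) ∂((μ.prod μ).prod ν) := e1
          _ = ∫ z, φ (Prod.map Prod.swap id z) ∂(P.map fun ω => ((X ω, Y ω), R ω)) := by
              rw [hlawW]
          _ = ∫ ω, φ (Prod.map Prod.swap id ((X ω, Y ω), R ω)) ∂P := e2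
          _ = ∫ ω, φ ((Y ω, X ω), R ω) ∂P := rfl
      rw [← h1, ← h2]
    -- a.e. decomposition of S
    have hdecomp : ∀ᵐ ω ∂P, S ω = X ω * p i + Y ω * p j + R ω := by
      filter_upwards [hA_sum] with ω hω
      have hsum1 : Summable fun k => if k = i then 0 else A k ω * p k := by
        refine hω.summable_of_eq_zero_or_self fun k => ?_
        by_cases hk : k = i <;> simp [hk]
      have hsum2 : Summable fun k => if k = i ∨ k = j then 0 else A k ω * p k := by
        refine hω.summable_of_eq_zero_or_self fun k => ?_
        by_cases hk : k = i ∨ k = j <;> simp [hk]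
      have hnn : ∀ k, 0 ≤ if k = i ∨ k = j then 0 else A k ω * p k := fun k => by
        by_cases hk : k = i ∨ k = j <;> simp [hk, hAp_nonneg]
      have hReq : R ω = ∑' k, if k = i ∨ k = j then 0 else A k ω * p k := by
        simp only [hR_def]
        rw [← ENNReal.ofReal_tsum_of_nonneg hnn hsum2,
          ENNReal.toReal_ofReal (tsum_nonneg hnn)]
      have h1 := Summable.tsum_eq_add_tsum_ite hω i
      have h2 := Summable.tsum_eq_add_tsum_ite hsum1 j
      have h3 : (fun k => if k = j then 0 else if k = i then 0 else A k ω * p k)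
          = fun k => if k = i ∨ k = j then 0 else A k ω * p k := by
        funext k
        by_cases h4 : k = i <;> by_cases h5 : k = j <;> simp [h4, h5]
      rw [h3] at h2
      have h4 : (if j = i then (0:ℝ) else A j ω * p j) = A j ω * p j :=
        if_neg fun h => hij h.symm
      rw [h2, h4] at h1
      rw [hReq]
      calc S ω = A i ω * p i + (A j ω * p j
            + ∑' k, if k = i ∨ k = j then 0 else A k ω * p k) := h1
        _ = X ω * p i + Y ω * p j
            + ∑' k, (if k = i ∨ k = j then 0 else A k ω * p k) := by
            rw [hX_def, hY_def]; ring
    -- pointwise objects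
    set C : ℝ := 1 / p i + 1 / p j with hC_def
    have hC_i : 1 / p i ≤ C := by
      rw [hC_def]; nlinarith [one_div_pos.mpr (hp_pos j)]
    have hC_j : 1 / p j ≤ C := by
      rw [hC_def]; nlinarith [one_div_pos.mpr (hp_pos i)]
    set φ₁ : (ℝ × ℝ) × ℝ → ℝ :=
      fun z => (z.1.1 - z.1.2) / (z.1.1 * p i + z.1.2 * p j + z.2) with hφ₁_def
    have hφ₁_meas : Measurable φ₁ := by
      apply Measurable.div
      · exact (measurable_fst.comp measurable_fst).sub (measurable_snd.comp measurable_fst)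
      · exact (((measurable_fst.comp measurable_fst).mul_const _).add
          ((measurable_snd.comp measurable_fst).mul_const _)).add measurable_snd
    set u : Ω → ℝ := fun ω => φ₁ ((X ω, Y ω), R ω) with hu_def
    set v : Ω → ℝ := fun ω => φ₁ ((Y ω, X ω), R ω) with hv_def
    set h : Ω → ℝ := fun ω => (X ω - Y ω)^2
      / ((X ω * p i + Y ω * p j + R ω) * (Y ω * p i + X ω * p j + R ω)) with hh_def
    have hu_meas : Measurable u := hφ₁_meas.comp hW_meas
    have hv_meas : Measurable v := hφ₁_meas.comp (((hA_meas j).prodMk (hA_meas i)).prodMk hR_meas)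
    have hh_meas : Measurable h := by
      apply Measurable.div
      · exact ((hA_meas i).sub (hA_meas j)).pow_const 2
      · exact ((((hA_meas i).mul_const _).add ((hA_meas j).mul_const _)).add hR_meas).mul
          ((((hA_meas j).mul_const _).add ((hA_meas i).mul_const _)).add hR_meas)
    -- positivity of denominators (everywhere)
    have hSd_pos : ∀ ω, 0 < X ω * p i + Y ω * p j + R ω := fun ω => by
      have := hR_nonneg ω
      nlinarith [mul_pos (hA_pos i ω) (hp_pos i), mul_pos (hA_pos j ω) (hp_pos j)]
    have hSd'_pos : ∀ ω, 0 < Y ω * p i + X ω * p j + R ω := fun ω => by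
      have := hR_nonneg ω
      nlinarith [mul_pos (hA_pos j ω) (hp_pos i), mul_pos (hA_pos i ω) (hp_pos j)]
    -- the basic bound
    have hkey_bd : ∀ a b r : ℝ, 0 < a → 0 < b → 0 ≤ r →
        a + b ≤ C * (a * p i + b * p j + r) := by
      intro a b r ha hb hr
      have e1 : (1 / p i) * (a * p i) = a := by
        rw [mul_comm a (p i), one_div, inv_mul_cancel_left₀ (hp_pos i).ne']
      have e2 : (1 / p j) * (b * p j) = b := by
        rw [mul_comm b (p j), one_div, inv_mul_cancel_left₀ (hp_pos j).ne']
      have expand : C * (a * p i + b * p j + r)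
          = (1 / p i) * (a * p i) + (1 / p i) * (b * p j + r)
            + ((1 / p j) * (b * p j) + (1 / p j) * (a * p i + r)) := by
        rw [hC_def]; ring
      have c1 : 0 ≤ (1 / p i) * (b * p j + r) :=
        mul_nonneg (one_div_pos.mpr (hp_pos i)).le
          (by nlinarith [mul_pos hb (hp_pos j)])
      have c2 : 0 ≤ (1 / p j) * (a * p i + r) :=
        mul_nonneg (one_div_pos.mpr (hp_pos j)).le
          (by nlinarith [mul_pos ha (hp_pos i)])
      rw [expand]
      linarith [e1, e2, c1, c2]
    have hu_bd : ∀ ω, ‖u ω‖ ≤ C := by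
      intro ω
      have hd := hSd_pos ω
      rw [hu_def]
      simp only [hφ₁_def]
      rw [Real.norm_eq_abs, abs_div, abs_of_pos hd, div_le_iff₀ hd]
      have h1 : |X ω - Y ω| ≤ X ω + Y ω :=
        abs_le.mpr ⟨by nlinarith [hA_pos i ω, hA_pos j ω], by nlinarith [hA_pos i ω, hA_pos j ω]⟩
      exact h1.trans (hkey_bd (X ω) (Y ω) (R ω) (hA_pos i ω) (hA_pos j ω) (hR_nonneg ω))
    have hv_bd : ∀ ω, ‖v ω‖ ≤ C := by
      intro ω
      have hd := hSd'_pos ω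
      rw [hv_def]
      simp only [hφ₁_def]
      rw [Real.norm_eq_abs, abs_div, abs_of_pos hd, div_le_iff₀ hd]
      have h1 : |Y ω - X ω| ≤ Y ω + X ω :=
        abs_le.mpr ⟨by nlinarith [hA_pos i ω, hA_pos j ω], by nlinarith [hA_pos i ω, hA_pos j ω]⟩
      exact h1.trans (hkey_bd (Y ω) (X ω) (R ω) (hA_pos j ω) (hA_pos i ω) (hR_nonneg ω))
    have hh_nonneg : ∀ ω, 0 ≤ h ω := fun ω => by
      rw [hh_def]
      exact div_nonneg (sq_nonneg _) (mul_pos (hSd_pos ω) (hSd'_pos ω)).le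
    have hh_bd : ∀ ω, ‖h ω‖ ≤ C * C := by
      intro ω
      have hd := hSd_pos ω
      have hd' := hSd'_pos ω
      rw [Real.norm_of_nonneg (hh_nonneg ω), hh_def]
      simp only
      rw [div_le_iff₀ (mul_pos hd hd')]
      have h1 : |X ω - Y ω| ≤ X ω + Y ω :=
        abs_le.mpr ⟨by nlinarith [hA_pos i ω, hA_pos j ω], by nlinarith [hA_pos i ω, hA_pos j ω]⟩
      have h2 := hkey_bd (X ω) (Y ω) (R ω) (hA_pos i ω) (hA_pos j ω) (hR_nonneg ω)
      have h3 := hkey_bd (Y ω) (X ω) (R ω) (hA_pos j ω) (hA_pos i ω) (hR_nonneg ω)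
      have h4 : (X ω - Y ω)^2 ≤ (X ω + Y ω) * (X ω + Y ω) := by
        have := sq_abs (X ω - Y ω)
        nlinarith [abs_nonneg (X ω - Y ω)]
      calc (X ω - Y ω)^2 ≤ (X ω + Y ω) * (X ω + Y ω) := h4
        _ ≤ (C * (X ω * p i + Y ω * p j + R ω)) * (C * (Y ω * p i + X ω * p j + R ω)) := by
            have hXY_pos : 0 < X ω + Y ω := by nlinarith [hA_pos i ω, hA_pos j ω]
            exact mul_le_mul h2 (by linarith) hXY_pos.le (hXY_pos.le.trans h2)
        _ = C * C * ((X ω * p i + Y ω * p j + R ω) * (Y ω * p i + X ω * p j + R ω)) := by ring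
    -- integrability
    have hu_int : Integrable u P :=
      Integrable.mono' (integrable_const C) hu_meas.aestronglyMeasurable (ae_of_all _ hu_bd)
    have hv_int : Integrable v P :=
      Integrable.mono' (integrable_const C) hv_meas.aestronglyMeasurable (ae_of_all _ hv_bd)
    have hh_int : Integrable h P :=
      Integrable.mono' (integrable_const (C * C)) hh_meas.aestronglyMeasurable (ae_of_all _ hh_bd)
    -- pointwise identity
    have hpoint : ∀ ω, u ω + v ω = -(p i - p j) * h ω := by
      intro ω
      have hd := (hSd_pos ω).ne'
      have hd' := (hSd'_pos ω).ne'
      rw [hu_def, hv_def, hh_def]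
      simp only [hφ₁_def]
      field_simp
      ring
    -- exchange
    have hexch : ∫ ω, u ω ∂P = ∫ ω, v ω ∂P := hExch φ₁ hφ₁_meas
    have hsum_int : ∫ ω, (u ω + v ω) ∂P = (∫ ω, u ω ∂P) + ∫ ω, v ω ∂P :=
      integral_add hu_int hv_int
    have hKdef : ∫ ω, (u ω + v ω) ∂P = -(p i - p j) * ∫ ω, h ω ∂P := by
      rw [integral_congr_ae (ae_of_all _ hpoint), integral_const_mul]
    -- identification with c i - c j
    have hcij : c i - c j = ∫ ω, u ω ∂P := by
      rw [hc_def]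
      simp only
      rw [← integral_sub (hAS_int i) (hAS_int j)]
      apply integral_congr_ae
      filter_upwards [hdecomp] with ω hd
      rw [div_sub_div_same, hu_def]
      simp only [hφ₁_def]
      rw [← hd, hX_def, hY_def]
    -- nondegeneracy
    have hnc_i : ∀ c0 : ℝ, ¬ (∀ᵐ ω ∂P, X ω = c0) := by
      intro c0 hc0
      apply hA_nonconst c0
      have e1 : P ((A i) ⁻¹' ({c0}ᶜ)) = 0 := by
        have hset : (A i) ⁻¹' ({c0}ᶜ) = {ω | ¬ X ω = c0} := by ext ω; simp [hX_def]
        rw [hset]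
        rw [ae_iff] at hc0
        exact hc0
      have e2 : (P.map (A i)) ({c0}ᶜ) = 0 := by
        rw [Measure.map_apply (hA_meas i) (measurableSet_singleton c0).compl]
        exact e1
      rw [(hA_ident i).map_eq] at e2
      have e3 : P ((A 0) ⁻¹' ({c0}ᶜ)) = 0 := by
        rw [← Measure.map_apply (hA_meas 0) (measurableSet_singleton c0).compl]
        exact e2
      rw [ae_iff]
      have hset2 : {ω | ¬ A 0 ω = c0} = (A 0) ⁻¹' ({c0}ᶜ) := by ext ω; simp
      rw [hset2]
      exact e3
    have hXY_ne : 0 < P {ω | X ω ≠ Y ω} :=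
      aux_ne_pos P X Y (hA_meas i) (hA_meas j) (hA_indep.indepFun hij)
        (hmapY.trans hmapX.symm) hnc_i
    have hK_pos : 0 < ∫ ω, h ω ∂P := by
      rw [integral_pos_iff_support_of_nonneg_ae (ae_of_all _ hh_nonneg) hh_int]
      refine lt_of_lt_of_le hXY_ne (measure_mono fun ω hω => ?_)
      have hne : X ω - Y ω ≠ 0 := sub_ne_zero.mpr hω
      have : 0 < h ω := by
        rw [hh_def]
        exact div_pos (by positivity) (mul_pos (hSd_pos ω) (hSd'_pos ω))
      exact this.ne'
    refine ⟨∫ ω, h ω ∂P, hK_pos, ?_⟩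
    have : 2 * ∫ ω, u ω ∂P = -(p i - p j) * ∫ ω, h ω ∂P := by
      rw [← hKdef, hsum_int, ← hexch]; ring
    rw [hcij]
    linarith
  have hc_strict : ∀ i j, p j < p i → c i < c j := by
    intro i j hpij
    have hij : i ≠ j := fun h => absurd (h ▸ hpij) (lt_irrefl _)
    obtain ⟨K, hK, heq⟩ := key3 i j hij
    nlinarith [mul_pos (sub_pos.mpr hpij) hK]
  have hc_mono : Monotone c := by
    intro i j hij
    rcases eq_or_lt_of_le hij with h | h
    · rw [h]
    · obtain ⟨K, hK, heq⟩ := key3 i j h.ne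
      have hp' : p j ≤ p i := hp_anti hij
      nlinarith [mul_nonneg (sub_nonneg.mpr hp') hK.le]
  -- endgame
  set d : ℕ → ℝ := fun n => 1 - c n with hd_def
  have hd_anti : Antitone d := fun i j hij => by
    simp only [hd_def]; linarith [hc_mono hij]
  have hpd_sum : Summable (fun n => p n * d n) := by
    have : (fun n => p n * d n) = fun n => p n - p n * c n := by
      funext n; simp only [hd_def]; ring
    rw [this]
    exact hp_sum.summable.sub hpc_sum
  have hpd0 : ∑' n, p n * d n = 0 := by
    have : (fun n => p n * d n) = fun n => p n - p n * c n := by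
      funext n; simp only [hd_def]; ring
    rw [this, Summable.tsum_sub hp_sum.summable hpc_sum, hp_sum.tsum_eq, key2, sub_self]
  have hpqd_sum : Summable (fun n => p n * q n * d n) := by
    have : (fun n => p n * q n * d n) = fun n => p n * q n - p n * q n * c n := by
      funext n; simp only [hd_def]; ring
    rw [this]
    exact hpq_sum.sub hpqc_sum
  suffices hgoal : 0 < ∑' n, p n * q n * d n by
    have heq : ∑' n, p n * q n * d n = ∑' n, p n * q n - ∑' n, p n * q n * c n := by
      have h1 : (fun n => p n * q n * d n) = fun n => p n * q n - p n * q n * c n := by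
        funext n; simp only [hd_def]; ring
      rw [h1, Summable.tsum_sub hpq_sum hpqc_sum]
    linarith
  -- two cases
  by_cases hcase : ∀ n, 0 ≤ d n
  · exfalso
    have hd0 : ∀ n, d n = 0 := by
      intro n
      by_contra hne
      have hpos : 0 < p n * d n :=
        mul_pos (hp_pos n) (lt_of_le_of_ne (hcase n) (Ne.symm hne))
      have := Summable.tsum_pos hpd_sum (fun m => mul_nonneg (hp_nonneg m) (hcase m)) n hpos
      rw [hpd0] at this
      exact lt_irrefl _ this
    obtain ⟨j, hj⟩ := (hp_sum.summable.tendsto_atTop_zero.eventually_lt_const (hp_pos 0)).exists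
    have := hc_strict 0 j hj
    have h0 : c 0 = 1 := by have := hd0 0; simp only [hd_def] at this; linarith
    have h1 : c j = 1 := by have := hd0 j; simp only [hd_def] at this; linarith
    rw [h0, h1] at this
    exact lt_irrefl _ this
  · push_neg at hcase
    have hN := Nat.find_spec hcase
    set N := Nat.find hcase with hN_def
    have hmin : ∀ m, m < N → 0 ≤ d m := fun m hm => le_of_not_gt (Nat.find_min hcase hm)
    have hterm_nonneg : ∀ n, 0 ≤ p n * (q n - q N) * d n := by
      intro n
      rcases lt_trichotomy n N with h | h | h
      · exact mul_nonneg (mul_nonneg (hp_nonneg n)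
          (sub_nonneg.mpr (hq_anti h.le))) (hmin n h)
      · rw [h]; simp
      · have h1 : q n - q N ≤ 0 := sub_nonpos.mpr (hq_anti h.le)
        have h2 : d n ≤ d N := hd_anti h.le
        rw [mul_assoc]
        have h3 : d n < 0 := h2.trans_lt hN
        exact mul_nonneg (hp_nonneg n) (by nlinarith)
    have hT_sum : Summable (fun n => p n * (q n - q N) * d n) := by
      have : (fun n => p n * (q n - q N) * d n)
          = fun n => p n * q n * d n - q N * (p n * d n) := by
        funext n; ring
      rw [this]
      exact hpqd_sum.sub (hpd_sum.mul_left (q N))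
    have hT_val : ∑' n, p n * (q n - q N) * d n = ∑' n, p n * q n * d n := by
      have h1 : (fun n => p n * (q n - q N) * d n)
          = fun n => p n * q n * d n - q N * (p n * d n) := by
        funext n; ring
      rw [h1, Summable.tsum_sub hpqd_sum (hpd_sum.mul_left (q N)), tsum_mul_left, hpd0, mul_zero,
        sub_zero]
    suffices hex : ∃ n0, 0 < p n0 * (q n0 - q N) * d n0 by
      obtain ⟨n0, hn0⟩ := hex
      have := Summable.tsum_pos hT_sum hterm_nonneg n0 hn0
      rw [hT_val] at this
      exact this
    by_cases hql : ∃ m, q m < q N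
    · obtain ⟨m, hm⟩ := hql
      have hNm : N < m := by
        by_contra hc'
        push_neg at hc'
        exact absurd (hq_anti hc') (not_le.mpr hm)
      refine ⟨m, ?_⟩
      have h1 : d m ≤ d N := hd_anti hNm.le
      rw [mul_assoc]
      exact mul_pos (hp_pos m)
        (mul_pos_of_neg_of_neg (sub_neg.mpr hm) (h1.trans_lt hN))
    · push_neg at hql
      -- q N is the minimum value; get some m with q N < q m, hence q N < q 0
      have hq0 : q N < q 0 := by
        obtain ⟨a, b, hab⟩ := hq_nonconst
        rcases eq_or_ne (q a) (q N) with ha | ha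
        · have hb : q b ≠ q N := fun h => hab (ha.trans h.symm)
          have : q N < q b := lt_of_le_of_ne (hql b) (Ne.symm hb)
          exact this.trans_le (hq_anti (Nat.zero_le b))
        · have : q N < q a := lt_of_le_of_ne (hql a) (Ne.symm ha)
          exact this.trans_le (hq_anti (Nat.zero_le a))
      -- show d 0 > 0
      have hd0_pos : 0 < d 0 := by
        have hsplit := Summable.sum_add_tsum_nat_add (f := fun n => p n * d n) N hpd_sum
        have htail_sum : Summable (fun k => p (k + N) * d (k + N)) :=
          ((summable_nat_add_iff N).mpr hpd_sum)
        have htail_le : ∑' k, p (k + N) * d (k + N) ≤ p N * d N := by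
          have hneg : Summable (fun k => -(p (k + N) * d (k + N))) := htail_sum.neg
          have h0 := Summable.le_tsum hneg 0 (fun j _ => by
            have : d (j + N) ≤ d N := hd_anti (Nat.le_add_left N j)
            have : p (j + N) * d (j + N) ≤ 0 :=
              mul_nonpos_of_nonneg_of_nonpos (hp_nonneg _) (this.trans hN.le)
            linarith)
          rw [tsum_neg] at h0
          simp only [zero_add] at h0
          linarith
        have hNdN : p N * d N < 0 := mul_neg_of_pos_of_neg (hp_pos N) hN
        have hhead : 0 < ∑ n ∈ Finset.range N, p n * d n := by
          have : ∑' n, p n * d n = 0 := hpd0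
          nlinarith [hsplit, htail_le]
        obtain ⟨n1, hn1mem, hn1⟩ := Finset.exists_lt_of_sum_lt (by
          simpa using hhead : ∑ n ∈ Finset.range N, (0:ℝ) < ∑ n ∈ Finset.range N, p n * d n)
        have hdn1 : 0 < d n1 := by
          rcases (mul_pos_iff.mp hn1) with ⟨_, h2⟩ | ⟨h1, _⟩
          · exact h2
          · exact absurd h1 (not_lt.mpr (hp_nonneg n1))
        exact lt_of_lt_of_le hdn1 (hd_anti (Nat.zero_le n1))
      exact ⟨0, mul_pos (mul_pos (hp_pos 0) (sub_pos.mpr hq0)) hd0_pos⟩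
end

section
/- Let $(p_n)_{n\ge1}$ be a nonincreasing summable sequence of positive reals and $(A_n)_{n\ge1}$ i.i.d. positive random variables with $\sum_n A_n p_n < \infty$ a.s. and $\mathbb{E}[A_n / \sum_j A_j p_j] < \infty$. Then the sequence $y_n := \mathbb{E}\big[A_n / \sum_{j\ge1} A_j p_j\big]$ is nondecreasing in $n$. -/
open MeasureTheory ProbabilityTheory Filter

lemma map_perm_eq {Ω : Type*} [MeasurableSpace Ω] (P : Measure Ω) [IsProbabilityMeasure P]
    (A : ℕ → Ω → ℝ) (hA_meas : ∀ n, Measurable (A n))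
    (hA_indep : iIndepFun A P)
    (hA_ident : ∀ n, IdentDistrib (A n) (A 0) P P)
    (σ : Equiv.Perm ℕ) :
    P.map (fun ω j => A (σ j) ω) = P.map (fun ω j => A j ω) := by
  classical
  have hX : Measurable (fun ω j => A j ω : Ω → ℕ → ℝ) := measurable_pi_lambda _ hA_meas
  have hX' : Measurable (fun ω j => A (σ j) ω : Ω → ℕ → ℝ) :=
    measurable_pi_lambda _ (fun j => hA_meas (σ j))
  have hident : ∀ k (B : Set ℝ), MeasurableSet B → P (A k ⁻¹' B) = P (A 0 ⁻¹' B) :=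
    fun k B hB => (hA_ident k).measure_mem_eq hB
  set C : Set (Set (ℕ → ℝ)) :=
    piiUnionInter
      (fun i => {s | MeasurableSet[MeasurableSpace.comap (fun f : ℕ → ℝ => f i) inferInstance] s})
      Set.univ with hC
  have hgen : (inferInstance : MeasurableSpace (ℕ → ℝ)) = MeasurableSpace.generateFrom C := by
    have h := generateFrom_piiUnionInter_measurableSet
      (fun i => MeasurableSpace.comap (fun f : ℕ → ℝ => f i) inferInstance) Set.univ
    rw [hC, h, iSup_univ]
    rfl
  haveI : IsProbabilityMeasure (P.map (fun ω j => A (σ j) ω)) :=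
    Measure.isProbabilityMeasure_map hX'.aemeasurable
  haveI : IsProbabilityMeasure (P.map (fun ω j => A j ω)) :=
    Measure.isProbabilityMeasure_map hX.aemeasurable
  refine ext_of_generate_finite C hgen
    (isPiSystem_piiUnionInter _
      (fun i => @MeasurableSpace.isPiSystem_measurableSet _
        (MeasurableSpace.comap (fun f : ℕ → ℝ => f i) inferInstance)) _)
    ?_ (by simp)
  rintro t ⟨s, -, f, hf, rfl⟩
  have hB' : ∀ i : ℕ, ∃ B : Set ℝ,
      i ∈ s → MeasurableSet B ∧ (fun g : ℕ → ℝ => g i) ⁻¹' B = f i := by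
    intro i
    by_cases hi : i ∈ s
    · obtain ⟨B, hB⟩ := MeasurableSpace.measurableSet_comap.1 (hf i hi)
      exact ⟨B, fun _ => hB⟩
    · exact ⟨Set.univ, fun h => absurd h hi⟩
  choose B hB using hB'
  have ht_meas : MeasurableSet (⋂ i ∈ s, f i) := by
    refine Finset.measurableSet_biInter s fun i hi => ?_
    rw [← (hB i hi).2]
    exact measurable_pi_apply i (hB i hi).1
  rw [Measure.map_apply hX' ht_meas, Measure.map_apply hX ht_meas]
  have h1 : (fun (ω : Ω) j => A (σ j) ω) ⁻¹' (⋂ i ∈ s, f i) = ⋂ i ∈ s, A (σ i) ⁻¹' B i := by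
    ext ω
    simp only [Set.mem_preimage, Set.mem_iInter]
    refine forall₂_congr fun i hi => ?_
    rw [← (hB i hi).2]
    rfl
  have h1' : (fun (ω : Ω) j => A j ω) ⁻¹' (⋂ i ∈ s, f i) = ⋂ i ∈ s, A i ⁻¹' B i := by
    ext ω
    simp only [Set.mem_preimage, Set.mem_iInter]
    refine forall₂_congr fun i hi => ?_
    rw [← (hB i hi).2]
    rfl
  have h2 : (⋂ i ∈ s, A (σ i) ⁻¹' B i) = ⋂ j ∈ s.image σ, A j ⁻¹' B (σ.symm j) := by
    ext ω
    simp only [Set.mem_iInter, Finset.mem_image]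
    constructor
    · rintro h j ⟨i, hi, rfl⟩
      simpa using h i hi
    · intro h i hi
      simpa using h (σ i) ⟨i, hi, rfl⟩
  have h3 := hA_indep.measure_inter_preimage_eq_mul (s.image σ)
    (sets := fun j => B (σ.symm j)) (fun j hj => ?_)
  swap
  · obtain ⟨i, hi, rfl⟩ := Finset.mem_image.1 hj
    simpa using (hB i hi).1
  have h4 := hA_indep.measure_inter_preimage_eq_mul s (sets := B) (fun i hi => (hB i hi).1)
  rw [h1, h2, h3, h1', h4]
  rw [Finset.prod_image (fun i _ j _ h => σ.injective h)]
  refine Finset.prod_congr rfl fun i hi => ?_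
  simp only [Equiv.symm_apply_apply]
  rw [hident (σ i) _ (hB i hi).1, hident i _ (hB i hi).1]

/-- **Monotonicity of `y n = 𝔼[A n / ∑ A j p j]`.** If `(p n)` is a nonincreasing summable
sequence of positive reals and `(A n)` are i.i.d. positive random variables with
`∑ A j p j < ∞` a.s. and integrable ratios, then `n ↦ 𝔼[A n / ∑ A j p j]` is nondecreasing. -/
theorem y_monotone
    {Ω : Type*} [MeasurableSpace Ω] (P : Measure Ω) [IsProbabilityMeasure P]
    (p : ℕ → ℝ) (hp_anti : Antitone p) (hp_pos : ∀ n, 0 < p n) (hp_sum : Summable p)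
    (A : ℕ → Ω → ℝ) (hA_meas : ∀ n, Measurable (A n))
    (hA_pos : ∀ n ω, 0 < A n ω)
    (hA_indep : iIndepFun A P)
    (hA_ident : ∀ n, IdentDistrib (A n) (A 0) P P)
    (hA_sum : ∀ᵐ ω ∂P, Summable (fun j => A j ω * p j))
    (hInt : ∀ n, Integrable (fun ω => A n ω / ∑' j, A j ω * p j) P) :
    Monotone (fun n => ∫ ω, A n ω / ∑' j, A j ω * p j ∂P) := by
  have hperm : ∀ σ : Equiv.Perm ℕ,
      P.map (fun ω j => A (σ j) ω) = P.map (fun ω j => A j ω) :=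
    fun σ => map_perm_eq P A hA_meas hA_indep hA_ident σ
  intro m n hmn
  rcases hmn.lt_or_eq with h | rfl
  swap
  · exact le_rfl
  classical
  set σ : Equiv.Perm ℕ := Equiv.swap m n with hσdef
  have hσm : σ m = n := Equiv.swap_apply_left m n
  have hσn : σ n = m := Equiv.swap_apply_right m n
  have hσσ : ∀ j, σ (σ j) = j := fun j => Equiv.swap_apply_self m n j
  set X : Ω → (ℕ → ℝ) := fun ω j => A j ω with hXdef
  have hX : Measurable X := measurable_pi_lambda _ hA_meas
  set T : (ℕ → ℝ) → (ℕ → ℝ) := fun f => f ∘ σ with hTdef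
  have hT : Measurable T := measurable_pi_lambda _ (fun j => measurable_pi_apply (σ j))
  have hswap : P.map (T ∘ X) = P.map X := hperm σ
  set D : (ℕ → ℝ) → ℝ := fun f => (∑' j, ENNReal.ofReal (f j * p j)).toReal with hDdef
  have hDmeas : Measurable D := by
    refine ENNReal.measurable_toReal.comp (Measurable.ennreal_tsum fun j => ?_)
    exact (Measurable.mul_const (f := fun f : ℕ → ℝ => f j) (measurable_pi_apply j) (p j)).ennreal_ofReal
  set g : (ℕ → ℝ) → ℝ := fun f => (f n - f m) / D f with hgdef
  have hgmeas : Measurable g :=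
    ((measurable_pi_apply n).sub (measurable_pi_apply m)).div hDmeas
  -- computation of D on nonneg summable sequences
  have hDval : ∀ f : ℕ → ℝ, (∀ j, 0 ≤ f j * p j) → Summable (fun j => f j * p j) →
      D f = ∑' j, f j * p j := by
    intro f hposf hsumf
    rw [hDdef]
    simp only
    rw [← ENNReal.ofReal_tsum_of_nonneg hposf hsumf,
      ENNReal.toReal_ofReal (tsum_nonneg hposf)]
  -- pointwise facts on the a.e. set of summability
  set S : Ω → ℝ := fun ω => ∑' j, A j ω * p j with hSdef
  set S' : Ω → ℝ := fun ω => ∑' j, A j ω * p (σ j) with hS'def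
  have key : ∀ ω, Summable (fun j => A j ω * p j) →
      Summable (fun j => A j ω * p (σ j)) ∧
      S' ω = S ω + (A n ω - A m ω) * (p m - p n) ∧
      0 < S ω ∧ 0 < S' ω ∧
      g (X ω) = (A n ω - A m ω) / S ω ∧
      g (T (X ω)) = (A m ω - A n ω) / S' ω := by
    intro ω hsum
    have hmn' : m ≠ n := h.ne
    set c : ℕ → ℝ := fun k => A k ω * (p (σ k) - p k) with hcdef
    have hc0 : ∀ k ∉ ({m, n} : Finset ℕ), c k = 0 := by
      intro k hk
      simp only [Finset.mem_insert, Finset.mem_singleton, not_or] at hk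
      rw [hcdef]
      simp [hσdef, Equiv.swap_apply_of_ne_of_ne hk.1 hk.2]
    have hcsum : Summable c := summable_of_ne_finset_zero hc0
    set u : ℕ → ℝ := fun k => A k ω * p (σ k) with hudef
    have hdecomp : ∀ k, u k = A k ω * p k + c k := by
      intro k; rw [hudef, hcdef]; ring
    have hsum' : Summable u := by
      have : u = fun k => A k ω * p k + c k := funext hdecomp
      rw [this]; exact hsum.add hcsum
    have htsum' : S' ω = S ω + (A n ω - A m ω) * (p m - p n) := by
      have h1 : S' ω = ∑' k, (A k ω * p k + c k) := tsum_congr hdecomp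
      rw [h1, Summable.tsum_add hsum hcsum, tsum_eq_sum hc0, Finset.sum_pair hmn', hcdef]
      simp only [hσm, hσn]
      ring
    have hSpos : 0 < S ω :=
      Summable.tsum_pos hsum (fun j => (mul_pos (hA_pos j ω) (hp_pos j)).le) 0
        (mul_pos (hA_pos 0 ω) (hp_pos 0))
    have hS'pos : 0 < S' ω :=
      Summable.tsum_pos hsum' (fun j => (mul_pos (hA_pos j ω) (hp_pos (σ j))).le) 0
        (mul_pos (hA_pos 0 ω) (hp_pos (σ 0)))
    refine ⟨hsum', htsum', hSpos, hS'pos, ?_, ?_⟩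
    · rw [hgdef]
      simp only
      rw [hDval (X ω) (fun j => (mul_pos (hA_pos j ω) (hp_pos j)).le) hsum]
    · rw [hgdef]
      simp only
      have hnum : T (X ω) n - T (X ω) m = A m ω - A n ω := by
        simp [hTdef, hXdef, hσm, hσn]
      have hcomp : ∀ j, T (X ω) j * p j = u (σ j) := by
        intro j
        rw [hudef]
        simp [hTdef, hXdef, hσσ j]
      have hTsum : Summable (fun j => T (X ω) j * p j) := by
        have h2 : Summable (fun j => u (σ j)) := σ.summable_iff.2 hsum'
        exact h2.congr fun j => (hcomp j).symm
      have hden : D (T (X ω)) = S' ω := by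
        rw [hDval (T (X ω)) (fun j => (mul_pos (hA_pos (σ j) ω) (hp_pos j)).le) hTsum]
        rw [tsum_congr hcomp]
        exact σ.tsum_eq u
      rw [hnum, hden]
  -- a.e. statements
  have hgX_ae : (fun ω => g (X ω)) =ᵐ[P]
      fun ω => A n ω / S ω - A m ω / S ω := by
    filter_upwards [hA_sum] with ω hω
    rw [(key ω hω).2.2.2.2.1, sub_div]
  have hInt1 : Integrable (fun ω => g (X ω)) P :=
    (((hInt n).sub (hInt m))).congr hgX_ae.symm
  have hI1 : ∫ ω, g (X ω) ∂P
      = (∫ ω, A n ω / S ω ∂P) - ∫ ω, A m ω / S ω ∂P := by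
    rw [integral_congr_ae hgX_ae, integral_sub (hInt n) (hInt m)]
  -- transfer along the swap
  have hIntg : Integrable g (P.map X) :=
    (integrable_map_measure hgmeas.aestronglyMeasurable hX.aemeasurable).mpr hInt1
  have hIntg2 : Integrable g (P.map (T ∘ X)) := by rw [hswap]; exact hIntg
  have hInt2 : Integrable (fun ω => g (T (X ω))) P :=
    (integrable_map_measure hgmeas.aestronglyMeasurable (hT.comp hX).aemeasurable).mp hIntg2
  have hI2 : ∫ ω, g (T (X ω)) ∂P = ∫ ω, g (X ω) ∂P := by
    have e1 : ∫ ω, g (T (X ω)) ∂P = ∫ f, g f ∂(P.map (T ∘ X)) :=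
      (integral_map (hT.comp hX).aemeasurable hgmeas.aestronglyMeasurable).symm
    have e2 : ∫ f, g f ∂(P.map X) = ∫ ω, g (X ω) ∂P :=
      integral_map hX.aemeasurable hgmeas.aestronglyMeasurable
    rw [e1, hswap, e2]
  have hnonneg : 0 ≤ ∫ ω, (g (X ω) + g (T (X ω))) ∂P := by
    refine integral_nonneg_of_ae ?_
    filter_upwards [hA_sum] with ω hω
    obtain ⟨hsum', hrel, hS, hS', hgx, hgtx⟩ := key ω hω
    have hS2 : 0 < S ω + (A n ω - A m ω) * (p m - p n) := hrel ▸ hS'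
    have hq : (A n ω - A m ω) / S ω + (A m ω - A n ω) / S' ω
        = (A n ω - A m ω) ^ 2 * (p m - p n) / (S ω * S' ω) := by
      rw [hrel]
      field_simp
      ring
    rw [hgx, hgtx, hq]
    have : 0 < S ω * S' ω := mul_pos hS hS'
    exact div_nonneg (mul_nonneg (sq_nonneg _) (sub_nonneg.2 (hp_anti h.le))) this.le
  have hsumint : ∫ ω, (g (X ω) + g (T (X ω))) ∂P
      = (∫ ω, g (X ω) ∂P) + ∫ ω, g (T (X ω)) ∂P :=
    integral_add hInt1 hInt2
  rw [hsumint, hI2, hI1] at hnonneg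
  show ∫ ω, A m ω / S ω ∂P ≤ ∫ ω, A n ω / S ω ∂P
  linarith
end
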